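/- The cycle graph C_n on n ≥ 4 vertices has no simplicial decomposition of width strictly less than n − 1; consequently the family of cycles has unbounded simplicial width, while each cycle has treewidth at most 2. -/

import Mathlib

/-- The symmetrized parent adjacency graph of a rooted tree given by a parent map. -/
def parentGraph {ι : Type} (parent : ι → Option ι) : SimpleGraph ι :=
  SimpleGraph.fromRel (fun a b => parent a = some b)

/-- A rooted tree decomposition of a graph `G`. -/
structure RTD (V ι : Type) (G : SimpleGraph V) where
  root : ι
  parent : ι → Option ι
  parent_root : parent root = none
  reach_root : ∀ n : ι, Relation.ReflTransGen (fun a b => parent a = some b) n root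
  bags : ι → Set V
  vert_cover : ∀ v : V, ∃ n : ι, v ∈ bags n
  edge_cover : ∀ u v : V, G.Adj u v → ∃ n : ι, u ∈ bags n ∧ v ∈ bags n
  vert_conn : ∀ v : V, ((parentGraph parent).induce {n : ι | v ∈ bags n}).Preconnected

/-- A rooted tree decomposition is simplicial if the intersection of every bag
with its parent's bag induces a clique of `G`. -/
def RTD.Simplicial {V ι : Type} {G : SimpleGraph V} (T : RTD V ι G) : Prop :=
  ∀ n p : ι, T.parent n = some p →
    ∀ u ∈ T.bags n ∩ T.bags p, ∀ v ∈ T.bags n ∩ T.bags p, u ≠ v → G.Adj u v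

/-- The cycle graph on `Fin n`: `i` is adjacent to `i + 1` (mod `n`). -/
def cycleG (n : ℕ) : SimpleGraph (Fin n) :=
  SimpleGraph.fromRel (fun i j => (j : ℕ) = ((i : ℕ) + 1) % n)

lemma cycle_adj {n : ℕ} [NeZero n] {i j : Fin n} :
    (cycleG n).Adj i j ↔ i ≠ j ∧ (j = i + 1 ∨ i = j + 1) := by
  have h1 : ∀ a b : Fin n, ((b : ℕ) = ((a : ℕ) + 1) % n ↔ b = a + 1) := by
    intro a b
    rw [Fin.ext_iff, Fin.add_def, Fin.val_one', Fin.val_mk,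
      Nat.add_mod (a : ℕ) 1 n, Nat.mod_eq_of_lt a.isLt]
  constructor
  · rintro ⟨hne, h | h⟩
    · exact ⟨hne, Or.inl ((h1 i j).1 h)⟩
    · exact ⟨hne, Or.inr ((h1 j i).1 h)⟩
  · rintro ⟨hne, h | h⟩
    · exact ⟨hne, Or.inl ((h1 i j).2 h)⟩
    · exact ⟨hne, Or.inr ((h1 j i).2 h)⟩


lemma fin_three_ne {n : ℕ} (hn : 4 ≤ n) [NeZero n] : (1 + (1 + 1) : Fin n) ≠ 0 := by
  intro h
  have h2 := congrArg Fin.val h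
  rw [Fin.add_def, Fin.add_def, Fin.val_one'] at h2
  simp only [Fin.val_mk] at h2
  have e1 : 1 % n = 1 := Nat.mod_eq_of_lt (by omega)
  have e0 : ((0 : Fin n) : ℕ) = 0 := Fin.val_zero n
  rw [e1, e0] at h2
  rw [Nat.mod_eq_of_lt (show 1 + 1 < n by omega)] at h2
  rw [Nat.mod_eq_of_lt (show 1 + (1 + 1) < n by omega)] at h2
  omega

lemma clique_subset {n : ℕ} (hn : 4 ≤ n) [NeZero n] (S : Set (Fin n))
    (hS : ∀ u ∈ S, ∀ v ∈ S, u ≠ v → (cycleG n).Adj u v) :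
    ∃ a : Fin n, S ⊆ {a, a + 1} := by
  have key : ∀ a : Fin n, a ∈ S → a + 1 ∈ S → S ⊆ ({a, a + 1} : Set (Fin n)) := by
    intro a ha ha1 w hw
    by_contra hws
    simp only [Set.mem_insert_iff, Set.mem_singleton_iff, not_or] at hws
    obtain ⟨h1, h2⟩ := hws
    have adj1 := (cycle_adj.1 (hS w hw a ha h1)).2
    have adj2 := (cycle_adj.1 (hS w hw (a + 1) ha1 h2)).2
    rcases adj1 with h | h
    · rcases adj2 with h' | h'
      · exact h1 (add_right_cancel h').symm
      · rw [h'] at h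
        rw [add_assoc, add_assoc] at h
        exact fin_three_ne hn (left_eq_add.1 h)
    · exact h2 h
  rcases S.eq_empty_or_nonempty with hS0 | ⟨u, hu⟩
  · exact ⟨0, by simp [hS0]⟩
  · by_cases hv : ∃ v ∈ S, v ≠ u
    · obtain ⟨v, hvS, hvu⟩ := hv
      rcases (cycle_adj.1 (hS u hu v hvS hvu.symm)).2 with h | h
      · exact ⟨u, key u hu (h ▸ hvS)⟩
      · exact ⟨v, key v hvS (h ▸ hu)⟩
    · push_neg at hv
      exact ⟨u, fun w hw => by simp [hv w hw]⟩

open Fin.CommRing in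
lemma cycle_prop {n : ℕ} (hn : 4 ≤ n) [NeZero n] (S : Set (Fin n)) (a : Fin n)
    (hSsub : S ⊆ {a, a + 1}) (Q : Fin n → Prop)
    (hQ : ∀ x y, x ∉ S → y ∉ S → (cycleG n).Adj x y → (Q x ↔ Q y)) :
    ∀ x y, x ∉ S → y ∉ S → (Q x ↔ Q y) := by
  have castval : ∀ k : ℕ, k < n → ((k : Fin n) : ℕ) = k := by
    intro k hk; rw [Fin.val_natCast, Nat.mod_eq_of_lt hk]
  have val1 : ((1 : Fin n) : ℕ) = 1 := by
    rw [Fin.val_one']; exact Nat.mod_eq_of_lt (by omega)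
  have hoff : ∀ k : ℕ, 2 ≤ k → k ≤ n - 1 → (a + (k : Fin n)) ∉ S := by
    intro k hk2 hk1 hmem
    rcases hSsub hmem with h | h
    · have h0 : (k : Fin n) = 0 := by
        have := h; nth_rewrite 2 [← add_zero a] at this; exact add_left_cancel this
      have := congrArg Fin.val h0
      rw [castval k (by omega), Fin.val_zero n] at this; omega
    · have h0 : (k : Fin n) = 1 := add_left_cancel (show a + (k : Fin n) = a + 1 from h)
      have := congrArg Fin.val h0
      rw [castval k (by omega), val1] at this; omega
  have hadj : ∀ k : ℕ, k + 1 < n → (cycleG n).Adj (a + (k : Fin n)) (a + ((k + 1 : ℕ) : Fin n)) := by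
    intro k hk
    rw [cycle_adj]
    have hc : ((k + 1 : ℕ) : Fin n) = (k : Fin n) + 1 := by push_cast; ring
    constructor
    · intro h
      have h0 : (k : Fin n) = ((k + 1 : ℕ) : Fin n) := add_left_cancel h
      have := congrArg Fin.val h0
      rw [castval k (by omega), castval (k + 1) hk] at this; omega
    · left; rw [hc, ← add_assoc]
  have chain : ∀ k : ℕ, 2 ≤ k → k ≤ n - 1 → (Q (a + (k : Fin n)) ↔ Q (a + ((2 : ℕ) : Fin n))) := by
    intro k hk2
    induction k, hk2 using Nat.le_induction with
    | base => intro _; exact Iff.rfl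
    | succ k hk ih =>
      intro hk1
      have h1 := hQ (a + (k : Fin n)) (a + ((k + 1 : ℕ) : Fin n))
        (hoff k hk (by omega)) (hoff (k + 1) (by omega) hk1) (hadj k (by omega))
      exact h1.symm.trans (ih (by omega))
  have toQ2 : ∀ x, x ∉ S → (Q x ↔ Q (a + ((2 : ℕ) : Fin n))) := by
    intro x hx
    have hk : x = a + (((x - a).val : ℕ) : Fin n) := by
      rw [Fin.cast_val_eq_self (x - a)]; rw [add_sub_cancel]
    set k := (x - a).val with hkdef
    have hklt : k < n := (x - a).isLt
    rcases Nat.lt_or_ge k 2 with hk2 | hk2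
    · interval_cases k
      · -- x = a
        rw [show x = a by rw [hk]; simp]
        have e1 := hQ a (a + ((n - 1 : ℕ) : Fin n)) (by rwa [show a = x by rw [hk]; simp])
          (hoff (n - 1) (by omega) (by omega)) ?_
        · exact e1.trans (chain (n - 1) (by omega) (by omega))
        · rw [cycle_adj]
          constructor
          · intro h
            have h0 : (0 : Fin n) = ((n - 1 : ℕ) : Fin n) := by
              nth_rewrite 1 [← add_zero a] at h; exact add_left_cancel h
            have := congrArg Fin.val h0
            rw [castval (n - 1) (by omega), Fin.val_zero n] at this; omega
          · right
            rw [add_assoc, show ((n - 1 : ℕ) : Fin n) + 1 = 0 by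
              rw [show ((n - 1 : ℕ) : Fin n) + 1 = ((n - 1 + 1 : ℕ) : Fin n) by push_cast; ring]
              rw [show n - 1 + 1 = n by omega, Fin.natCast_self], add_zero]
      · -- x = a + 1
        have hx1 : x = a + 1 := by rw [hk]; norm_num
        have e1 := hQ x (a + ((2 : ℕ) : Fin n)) hx (hoff 2 le_rfl (by omega)) ?_
        · exact e1
        · rw [hx1, show (a : Fin n) + 1 = a + ((1 : ℕ) : Fin n) by norm_num]
          exact hadj 1 (by omega)
    · rw [hk]; exact chain k hk2 (by omega)
  intro x y hx hy
  exact (toQ2 x hx).trans (toQ2 y hy).symm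

def Below {ι : Type} (parent : ι → Option ι) (a b : ι) : Prop :=
  Relation.ReflTransGen (fun x y => parent x = some y) a b

lemma walk_cross {ι : Type} {parent : ι → Option ι} {n₀ p : ι} (hp : parent n₀ = some p)
    {σ : Set ι} :
    ∀ {x y : ↑σ}, ((parentGraph parent).induce σ).Walk x y →
      Below parent x.1 n₀ → ¬ Below parent y.1 n₀ → n₀ ∈ σ ∧ p ∈ σ := by
  intro x y w
  induction w with
  | nil => intro hx hy; exact absurd hx hy
  | @cons x m y hadj w ih =>
    intro hx hy
    by_cases hm : Below parent m.1 n₀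
    · exact ih hm hy
    · have hadj' : x.1 ≠ m.1 ∧ (parent x.1 = some m.1 ∨ parent m.1 = some x.1) := by
        simpa [parentGraph, SimpleGraph.fromRel_adj] using hadj
      rcases hadj'.2 with h | h
      · rcases Relation.ReflTransGen.cases_head hx with heq | ⟨c, hc, hcr⟩
        · have hmp : m.1 = p := by
            rw [heq, hp] at h
            exact (Option.some_inj.1 h.symm)
          exact ⟨heq ▸ x.2, hmp ▸ m.2⟩
        · have hcm : m.1 = c := by
            rw [h] at hc
            exact (Option.some_inj.1 hc)
          exact absurd (hcm ▸ hcr) hm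
      · exact absurd (Relation.ReflTransGen.head (r := fun a b => parent a = some b) h hx) hm

lemma exists_iter {ι : Type} (parent : ι → Option ι) (root : ι) (a : ι)
    (h : Relation.ReflTransGen (fun x y => parent x = some y) a root) :
    ∃ k, (fun x => (parent x).getD x)^[k] a = root := by
  induction h using Relation.ReflTransGen.head_induction_on with
  | refl => exact ⟨0, rfl⟩
  | head h' _ ih =>
    obtain ⟨k, hk⟩ := ih
    refine ⟨k + 1, ?_⟩
    rw [Function.iterate_succ_apply]
    simpa [h'] using hk

open Classical in
noncomputable def rdepth {ι : Type} (parent : ι → Option ι) (root : ι)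
    (hreach : ∀ a, Relation.ReflTransGen (fun x y => parent x = some y) a root) (a : ι) : ℕ :=
  Nat.find (exists_iter parent root a (hreach a))

open Classical in
lemma rdepth_parent {ι : Type} {parent : ι → Option ι} {root : ι}
    (hroot : parent root = none)
    (hreach : ∀ a, Relation.ReflTransGen (fun x y => parent x = some y) a root)
    {a b : ι} (h : parent a = some b) :
    rdepth parent root hreach b < rdepth parent root hreach a := by
  classical
  have spec : (fun x => (parent x).getD x)^[rdepth parent root hreach a] a = root :=
    Nat.find_spec (exists_iter parent root a (hreach a))
  have hane : a ≠ root := by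
    intro he; rw [he, hroot] at h; exact absurd h (by simp)
  have hk0 : rdepth parent root hreach a ≠ 0 := by
    intro he; rw [he] at spec; exact hane spec
  obtain ⟨k, hke⟩ : ∃ k, rdepth parent root hreach a = k + 1 :=
    ⟨rdepth parent root hreach a - 1, by omega⟩
  rw [hke, Function.iterate_succ_apply] at spec
  have spec' : (fun x => (parent x).getD x)^[k] b = root := by simpa [h] using spec
  have hle : rdepth parent root hreach b ≤ k := Nat.find_le spec'
  omega

lemma rdepth_mono {ι : Type} {parent : ι → Option ι} {root : ι}
    (hroot : parent root = none)
    (hreach : ∀ a, Relation.ReflTransGen (fun x y => parent x = some y) a root)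
    {a b : ι} (h : Below parent a b) :
    rdepth parent root hreach b ≤ rdepth parent root hreach a := by
  induction h with
  | refl => exact le_rfl
  | tail _ hcb ih => exact (rdepth_parent hroot hreach hcb).le.trans ih

lemma not_below_parent {ι : Type} {parent : ι → Option ι} {root : ι}
    (hroot : parent root = none)
    (hreach : ∀ a, Relation.ReflTransGen (fun x y => parent x = some y) a root)
    {n₀ p : ι} (h : parent n₀ = some p) : ¬ Below parent p n₀ :=
  fun hb => absurd (rdepth_mono hroot hreach hb) (not_le.2 (rdepth_parent hroot hreach h))

lemma part1 (n : ℕ) (hn : 4 ≤ n) :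
    ¬ ∃ (ι : Type) (_ : Fintype ι) (T : RTD (Fin n) ι (cycleG n)),
        T.Simplicial ∧ ∀ b : ι, (T.bags b).ncard ≤ n - 1 := by
  haveI : NeZero n := ⟨by omega⟩
  rintro ⟨ι, fι, T, hsimp, hwid⟩
  classical
  let Cover : ι → Prop := fun m => ∀ v : Fin n, ∃ a, Below T.parent a m ∧ v ∈ T.bags a
  have hcover_root : Cover T.root := fun v => by
    obtain ⟨a, ha⟩ := T.vert_cover v
    exact ⟨a, T.reach_root a, ha⟩
  let d := rdepth T.parent T.root T.reach_root
  obtain ⟨m, hmC, hmax⟩ : ∃ m, Cover m ∧ ∀ c, Cover c → d c ≤ d m := by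
    obtain ⟨m, hm, hmax⟩ := Finset.exists_max_image (Finset.univ.filter Cover) d
      ⟨T.root, by simp only [Finset.mem_filter, Finset.mem_univ, true_and]; exact hcover_root⟩
    exact ⟨m, (Finset.mem_filter.1 hm).2, fun c hc => hmax c (by simp only [Finset.mem_filter, Finset.mem_univ, true_and]; exact hc)⟩
  have hall : ∀ v : Fin n, v ∈ T.bags m := by
    intro v
    by_contra hv
    obtain ⟨a, haB, hav⟩ := hmC v
    rcases Relation.ReflTransGen.cases_tail haB with heq | ⟨c, hac, hcm⟩
    · rw [heq] at hv; exact hv hav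
    · set S : Set (Fin n) := T.bags c ∩ T.bags m with hSdef
      have hclique : ∀ u ∈ S, ∀ w ∈ S, u ≠ w → (cycleG n).Adj u w :=
        fun u hu w hw huw => hsimp c m hcm u hu w hw huw
      obtain ⟨a0, ha0⟩ := clique_subset hn S hclique
      set A : Set (Fin n) := {w | ∃ b, Below T.parent b c ∧ w ∈ T.bags b} with hAdef
      have hcross : ∀ w : Fin n, w ∈ A → ∀ b, ¬ Below T.parent b c → w ∈ T.bags b → w ∈ S := by
        rintro w ⟨b', hb', hwb'⟩ b hb hwb
        obtain ⟨wk⟩ := T.vert_conn w ⟨b', hwb'⟩ ⟨b, hwb⟩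
        exact walk_cross hcm wk hb' hb
      have hQ : ∀ x y, x ∉ S → y ∉ S → (cycleG n).Adj x y → (x ∈ A ↔ y ∈ A) := by
        intro x y hx hy hadj
        obtain ⟨b, hxb, hyb⟩ := T.edge_cover x y hadj
        by_cases hb : Below T.parent b c
        · exact iff_of_true ⟨b, hb, hxb⟩ ⟨b, hb, hyb⟩
        · exact iff_of_false (fun hxA => hx (hcross x hxA b hb hxb))
            (fun hyA => hy (hcross y hyA b hb hyb))
      have hvA : v ∈ A := ⟨a, hac, hav⟩
      have hvS : v ∉ S := fun hS => hv hS.2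
      have hCc : Cover c := by
        intro w
        by_cases hw : w ∈ S
        · exact ⟨c, Relation.ReflTransGen.refl, hw.1⟩
        · exact (cycle_prop hn S a0 ha0 (· ∈ A) hQ w v hw hvS).2 hvA
      have h1 : d c ≤ d m := hmax c hCc
      have h2 : d m < d c := rdepth_parent T.parent_root T.reach_root hcm
      omega
  have huniv : T.bags m = Set.univ := Set.eq_univ_of_forall hall
  have hcard := hwid m
  rw [huniv, Set.ncard_univ, Nat.card_eq_fintype_card, Fintype.card_fin] at hcard
  omega

def cparent (n : ℕ) : Fin (n - 2) → Option (Fin (n - 2)) :=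
  fun k => if k.val = 0 then none
    else some ⟨k.val - 1, Nat.lt_of_le_of_lt (Nat.sub_le _ _) k.isLt⟩

def cbag (n : ℕ) (k : Fin (n - 2)) : Set (Fin n) :=
  {v | v.val = 0 ∨ v.val = k.val + 1 ∨ v.val = k.val + 2}

lemma cbag_mem {n : ℕ} {k : Fin (n - 2)} {v : Fin n} :
    v ∈ cbag n k ↔ (v.val = 0 ∨ v.val = k.val + 1 ∨ v.val = k.val + 2) := Iff.rfl

lemma cparent_eq {n : ℕ} {k k' : Fin (n - 2)} (h : k.val = k'.val + 1) :
    cparent n k = some k' := by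
  rw [cparent, if_neg (by omega)]
  congr 1
  exact Fin.ext (by simp; omega)

lemma part2 (n : ℕ) (hn : 4 ≤ n) :
    ∃ (ι : Type) (_ : Fintype ι) (T : RTD (Fin n) ι (cycleG n)),
        ∀ b : ι, (T.bags b).ncard ≤ 3 := by
  haveI : NeZero n := ⟨by omega⟩
  have hn2 : 0 < n - 2 := by omega
  refine ⟨Fin (n - 2), inferInstance,
    { root := ⟨0, hn2⟩
      parent := cparent n
      parent_root := if_pos rfl
      reach_root := ?_
      bags := cbag n
      vert_cover := ?_
      edge_cover := ?_
      vert_conn := ?_ }, ?_⟩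
  · -- reach_root
    have key : ∀ j : ℕ, ∀ k : Fin (n - 2), k.val = j →
        Relation.ReflTransGen (fun a b => cparent n a = some b) k ⟨0, hn2⟩ := by
      intro j
      induction j with
      | zero => intro k hk; rw [show k = ⟨0, hn2⟩ from Fin.ext hk]
      | succ j ih =>
        intro k hk
        have hj : j < n - 2 := by omega
        exact Relation.ReflTransGen.head (cparent_eq (k' := ⟨j, hj⟩) (by simp; omega))
          (ih ⟨j, hj⟩ rfl)
    exact fun k => key k.val k rfl
  · -- vert_cover
    intro v
    have hv := v.isLt
    rcases eq_or_ne v.val 0 with h0 | h0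
    · exact ⟨⟨0, hn2⟩, cbag_mem.2 (Or.inl h0)⟩
    · rcases Nat.lt_or_ge v.val (n - 1) with h1 | h1
      · exact ⟨⟨v.val - 1, by omega⟩, cbag_mem.2 (Or.inr (Or.inl (by simp; omega)))⟩
      · exact ⟨⟨n - 3, by omega⟩, cbag_mem.2 (Or.inr (Or.inr (by simp; omega)))⟩
  · -- edge_cover
    have key : ∀ u v : Fin n, (v : ℕ) = ((u : ℕ) + 1) % n →
        ∃ k : Fin (n - 2), u ∈ cbag n k ∧ v ∈ cbag n k := by
      intro u v h
      have hu := u.isLt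
      have hv := v.isLt
      rcases Nat.lt_or_ge u.val (n - 1) with h1 | h1
      · have hv1 : v.val = u.val + 1 := by rw [h]; exact Nat.mod_eq_of_lt (by omega)
        rcases eq_or_ne u.val 0 with h0 | h0
        · exact ⟨⟨0, hn2⟩, cbag_mem.2 (Or.inl h0),
            cbag_mem.2 (Or.inr (Or.inl (by simp; omega)))⟩
        · exact ⟨⟨u.val - 1, by omega⟩, cbag_mem.2 (Or.inr (Or.inl (by simp; omega))),
            cbag_mem.2 (Or.inr (Or.inr (by simp; omega)))⟩
      · have hu1 : u.val = n - 1 := by omega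
        have hv0 : v.val = 0 := by
          rw [h, hu1, show n - 1 + 1 = n by omega]
          exact Nat.mod_self n
        exact ⟨⟨n - 3, by omega⟩, cbag_mem.2 (Or.inr (Or.inr (by simp; omega))),
          cbag_mem.2 (Or.inl hv0)⟩
    intro u v hadj
    rw [cycleG, SimpleGraph.fromRel_adj] at hadj
    rcases hadj.2 with h | h
    · exact key u v h
    · obtain ⟨k, h1, h2⟩ := key v u h
      exact ⟨k, h2, h1⟩
  · -- vert_conn
    intro v
    set σ : Set (Fin (n - 2)) := {k | v ∈ cbag n k} with hσ
    by_cases h0 : v.val = 0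
    · -- v is in every bag
      have hmem : ∀ k : Fin (n - 2), k ∈ σ := fun k => Or.inl h0
      have key : ∀ j : ℕ, ∀ x : ↥σ, (x : Fin (n - 2)).val = j →
          ((parentGraph (cparent n)).induce σ).Reachable x ⟨⟨0, hn2⟩, hmem _⟩ := by
        intro j
        induction j with
        | zero =>
          intro x hx
          rw [show x = ⟨⟨0, hn2⟩, hmem _⟩ from Subtype.ext (Fin.ext hx)]
        | succ j ih =>
          intro x hx
          have hj : j < n - 2 := by
            have := (x : Fin (n - 2)).isLt; omega
          have hadj : ((parentGraph (cparent n)).induce σ).Adj x ⟨⟨j, hj⟩, hmem _⟩ := by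
            simp only [SimpleGraph.induce, SimpleGraph.comap_adj, Function.Embedding.coe_subtype,
              parentGraph, SimpleGraph.fromRel_adj]
            refine ⟨fun he => ?_, Or.inl (cparent_eq (by simp; omega))⟩
            · have := congrArg Fin.val he; simp only [Fin.val_mk] at this; omega
          exact hadj.reachable.trans (ih ⟨⟨j, hj⟩, hmem _⟩ rfl)
      intro x y
      exact (key _ x rfl).trans (key _ y rfl).symm
    · -- v is in at most two (consecutive) bags
      have hconstr : ∀ x : ↥σ, v.val = (x : Fin (n - 2)).val + 1 ∨
          v.val = (x : Fin (n - 2)).val + 2 := by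
        intro x
        rcases x.2 with h | h
        · exact absurd h h0
        · exact h
      have hadj : ∀ x y : ↥σ, (x : Fin (n - 2)).val = (y : Fin (n - 2)).val + 1 →
          ((parentGraph (cparent n)).induce σ).Adj x y := by
        intro x y h
        simp only [SimpleGraph.induce, SimpleGraph.comap_adj, Function.Embedding.coe_subtype,
          parentGraph, SimpleGraph.fromRel_adj]
        refine ⟨fun he => ?_, Or.inl (cparent_eq h)⟩
        rw [he] at h; omega
      intro x y
      have hx := hconstr x
      have hy := hconstr y
      by_cases he : (x : Fin (n - 2)).val = (y : Fin (n - 2)).val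
      · rw [show x = y from Subtype.ext (Fin.ext he)]
      · have : (x : Fin (n - 2)).val = (y : Fin (n - 2)).val + 1 ∨
            (y : Fin (n - 2)).val = (x : Fin (n - 2)).val + 1 := by omega
        rcases this with h | h
        · exact (hadj x y h).reachable
        · exact ((hadj y x h).reachable).symm
  · -- width bound
    intro k
    show (cbag n k).ncard ≤ 3
    have hk := k.isLt
    have heq : cbag n k = {(⟨0, by omega⟩ : Fin n), ⟨k.val + 1, by omega⟩, ⟨k.val + 2, by omega⟩} := by
      ext v
      simp only [cbag, Set.mem_setOf_eq, Set.mem_insert_iff, Set.mem_singleton_iff, Fin.ext_iff]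
    rw [heq]
    refine (Set.ncard_insert_le _ _).trans ?_
    have h2 := (Set.ncard_insert_le (⟨k.val + 1, by omega⟩ : Fin n) {(⟨k.val + 2, by omega⟩ : Fin n)})
    have h3 : ({(⟨k.val + 2, by omega⟩ : Fin n)} : Set (Fin n)).ncard = 1 := Set.ncard_singleton _
    omega

/-- For n ≥ 4, the cycle C_n has no simplicial decomposition of width strictly less
than n − 1 (i.e., with all bags of size at most n − 1), while it does have a tree
decomposition of width at most 2 (all bags of size at most 3). -/
theorem cycle_simplicial_width (n : ℕ) (hn : 4 ≤ n) :
    (¬ ∃ (ι : Type) (_ : Fintype ι) (T : RTD (Fin n) ι (cycleG n)),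
        T.Simplicial ∧ ∀ b : ι, (T.bags b).ncard ≤ n - 1) ∧
    (∃ (ι : Type) (_ : Fintype ι) (T : RTD (Fin n) ι (cycleG n)),
        ∀ b : ι, (T.bags b).ncard ≤ 3) := by
  exact ⟨part1 n hn, part2 n hn⟩
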